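/- If sequences {α(t)} and {γ(t)} satisfy: (i) lim_{t→∞}(γ̄_i(t) − ū_i(t)) = 0 for all i, (ii) γ_i(t) ∈ [0, u_i^max] for all i and t, and φ is concave and M-Lipschitz on the box, then liminf_{t→∞} φ(ū(t)) ≥ liminf_{t→∞} (1/t)·∑_{τ=0}^{t−1} φ(γ(τ)). -/

import Mathlib

open Filter Finset

theorem stmt_12 (N : ℕ) (umax : Fin N → ℝ) (humax : ∀ i, 0 < umax i)
    (u γ : Fin N → ℕ → ℝ)
    (hu : ∀ i t, u i t ∈ Set.Icc (0 : ℝ) (umax i))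
    (hγ : ∀ i t, γ i t ∈ Set.Icc (0 : ℝ) (umax i))
    (φ : EuclideanSpace ℝ (Fin N) → ℝ) (M : NNReal)
    (hconc : ConcaveOn ℝ {v : EuclideanSpace ℝ (Fin N) | ∀ i, v i ∈ Set.Icc (0 : ℝ) (umax i)} φ)
    (hlip : LipschitzOnWith M φ {v : EuclideanSpace ℝ (Fin N) | ∀ i, v i ∈ Set.Icc (0 : ℝ) (umax i)})
    (hlim : ∀ i, Filter.Tendsto
      (fun t : ℕ => (1 / (t : ℝ)) * ∑ τ ∈ Finset.range t, γ i τ -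
        (1 / (t : ℝ)) * ∑ τ ∈ Finset.range t, u i τ)
      Filter.atTop (nhds 0)) :
    Filter.liminf
        (fun t : ℕ => φ ((WithLp.equiv 2 (Fin N → ℝ)).symm
          (fun i => (1 / (t : ℝ)) * ∑ τ ∈ Finset.range t, u i τ)))
        Filter.atTop ≥
      Filter.liminf
        (fun t : ℕ => (1 / (t : ℝ)) * ∑ τ ∈ Finset.range t,
          φ ((WithLp.equiv 2 (Fin N → ℝ)).symm (fun i => γ i τ)))
        Filter.atTop := by
  classical
  set S : Set (EuclideanSpace ℝ (Fin N)) :=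
    {v : EuclideanSpace ℝ (Fin N) | ∀ i, v i ∈ Set.Icc (0 : ℝ) (umax i)} with hS
  -- the averaged vectors
  set barU : ℕ → EuclideanSpace ℝ (Fin N) := fun t =>
    (WithLp.equiv 2 (Fin N → ℝ)).symm (fun i => (1 / (t : ℝ)) * ∑ τ ∈ Finset.range t, u i τ)
    with hbarU
  set barG : ℕ → EuclideanSpace ℝ (Fin N) := fun t =>
    (WithLp.equiv 2 (Fin N → ℝ)).symm (fun i => (1 / (t : ℝ)) * ∑ τ ∈ Finset.range t, γ i τ)
    with hbarG
  set A : ℕ → ℝ := fun t => φ (barU t) with hA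
  set B : ℕ → ℝ := fun t => φ (barG t) with hB
  set C : ℕ → ℝ := fun t => (1 / (t : ℝ)) * ∑ τ ∈ Finset.range t,
      φ ((WithLp.equiv 2 (Fin N → ℝ)).symm (fun i => γ i τ)) with hC
  -- membership of averages in S
  have avg_mem : ∀ (w : Fin N → ℕ → ℝ), (∀ i t, w i t ∈ Set.Icc (0 : ℝ) (umax i)) →
      ∀ t : ℕ, ((WithLp.equiv 2 (Fin N → ℝ)).symm
        (fun i => (1 / (t : ℝ)) * ∑ τ ∈ Finset.range t, w i τ) : EuclideanSpace ℝ (Fin N)) ∈ S := by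
    intro w hw t i
    simp only [WithLp.equiv_symm_apply, PiLp.toLp_apply]
    rcases Nat.eq_zero_or_pos t with rfl | ht
    · simp [Set.mem_Icc, (humax i).le]
    · have ht' : (0:ℝ) < t := by exact_mod_cast ht
      constructor
      · have : (0:ℝ) ≤ ∑ τ ∈ Finset.range t, w i τ :=
          Finset.sum_nonneg fun τ _ => (hw i τ).1
        positivity
      · rw [div_mul_eq_mul_div, one_mul, div_le_iff₀ ht']
        calc ∑ τ ∈ Finset.range t, w i τ ≤ ∑ τ ∈ Finset.range t, umax i :=
              Finset.sum_le_sum fun τ _ => (hw i τ).2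
          _ = t * umax i := by simp [mul_comm]
          _ = umax i * t := by ring
  have hmemU : ∀ t, barU t ∈ S := fun t => avg_mem u hu t
  have hmemG : ∀ t, barG t ∈ S := fun t => avg_mem γ hγ t
  -- Jensen: for t ≥ 1, C t ≤ B t
  have jensen : ∀ t : ℕ, 1 ≤ t → C t ≤ B t := by
    intro t ht
    have ht' : (0:ℝ) < t := by exact_mod_cast ht
    have hz : ∀ τ ∈ Finset.range t,
        ((WithLp.equiv 2 (Fin N → ℝ)).symm (fun i => γ i τ) : EuclideanSpace ℝ (Fin N)) ∈ S := by
      intro τ _ i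
      simpa [WithLp.equiv_symm_apply, PiLp.toLp_apply] using hγ i τ
    have h := hconc.le_map_sum (t := Finset.range t) (w := fun _ => 1 / (t:ℝ))
      (p := fun τ => (WithLp.equiv 2 (Fin N → ℝ)).symm (fun i => γ i τ))
      (fun τ _ => by positivity)
      (by rw [Finset.sum_const, Finset.card_range, nsmul_eq_mul]; field_simp)
      hz
    have hvec : (∑ τ ∈ Finset.range t, (1/(t:ℝ)) •
        ((WithLp.equiv 2 (Fin N → ℝ)).symm (fun i => γ i τ)) : EuclideanSpace ℝ (Fin N))
        = barG t := by
      ext i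
      have e := WithLp.linearEquiv 2 ℝ (Fin N → ℝ)
      calc (∑ τ ∈ Finset.range t, (1/(t:ℝ)) •
              ((WithLp.equiv 2 (Fin N → ℝ)).symm fun i => γ i τ) : EuclideanSpace ℝ (Fin N)) i
          = (WithLp.linearEquiv 2 ℝ (Fin N → ℝ)) (∑ τ ∈ Finset.range t, (1/(t:ℝ)) •
              ((WithLp.equiv 2 (Fin N → ℝ)).symm fun i => γ i τ)) i := rfl
        _ = (∑ τ ∈ Finset.range t, (WithLp.linearEquiv 2 ℝ (Fin N → ℝ)) ((1/(t:ℝ)) •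
              ((WithLp.equiv 2 (Fin N → ℝ)).symm fun i => γ i τ))) i := by rw [map_sum]
        _ = ∑ τ ∈ Finset.range t, ((WithLp.linearEquiv 2 ℝ (Fin N → ℝ)) ((1/(t:ℝ)) •
              ((WithLp.equiv 2 (Fin N → ℝ)).symm fun i => γ i τ))) i := by
              rw [Finset.sum_apply]
        _ = ∑ τ ∈ Finset.range t, (1/(t:ℝ)) * γ i τ := by
              simp [map_smul, WithLp.linearEquiv_apply, WithLp.equiv_symm_apply, PiLp.toLp_apply]
        _ = barG t i := by
              simp [hbarG, WithLp.equiv_symm_apply, PiLp.toLp_apply, Finset.mul_sum]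
    rw [hvec] at h
    calc C t = ∑ τ ∈ Finset.range t, (1/(t:ℝ)) •
          φ ((WithLp.equiv 2 (Fin N → ℝ)).symm (fun i => γ i τ)) := by
          simp [hC, smul_eq_mul, Finset.mul_sum]
      _ ≤ B t := h
  -- the vector difference tends to 0
  have hD : Tendsto (fun t => barG t - barU t) atTop (nhds 0) := by
    have hpi : Tendsto (fun t : ℕ => fun i : Fin N =>
        (1 / (t : ℝ)) * ∑ τ ∈ Finset.range t, γ i τ -
          (1 / (t : ℝ)) * ∑ τ ∈ Finset.range t, u i τ) atTop (nhds 0) := by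
      rw [tendsto_pi_nhds]
      intro i
      simpa using hlim i
    have hcont := ((PiLp.continuousLinearEquiv 2 ℝ (fun _ : Fin N => ℝ)).symm.continuous.tendsto
      (0 : Fin N → ℝ)).comp hpi
    have h0 : (PiLp.continuousLinearEquiv 2 ℝ (fun _ : Fin N => ℝ)).symm (0 : Fin N → ℝ) = 0 :=
      map_zero _
    rw [h0] at hcont
    refine hcont.congr fun t => ?_
    ext i
    simp [hbarG, hbarU, WithLp.equiv_symm_apply, PiLp.toLp_apply, PiLp.sub_apply,
      PiLp.continuousLinearEquiv_symm_apply]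
  have hnD : Tendsto (fun t => ‖barG t - barU t‖) atTop (nhds 0) := by
    simpa using hD.norm
  -- A - B tends to 0
  have hdiff : Tendsto (fun t => A t - B t) atTop (nhds 0) := by
    have habs : ∀ t, |A t - B t| ≤ (M : ℝ) * ‖barG t - barU t‖ := by
      intro t
      have := hlip.dist_le_mul (barU t) (hmemU t) (barG t) (hmemG t)
      rw [Real.dist_eq, dist_eq_norm] at this
      calc |A t - B t| ≤ (M : ℝ) * ‖barU t - barG t‖ := this
        _ = (M : ℝ) * ‖barG t - barU t‖ := by rw [norm_sub_rev]
    have hsq : Tendsto (fun t => |A t - B t|) atTop (nhds 0) := by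
      have : Tendsto (fun t => (M : ℝ) * ‖barG t - barU t‖) atTop (nhds 0) := by
        simpa using hnD.const_mul (M : ℝ)
      exact squeeze_zero (fun t => abs_nonneg _) habs this
    rw [show (0:ℝ) = 0 from rfl]
    exact tendsto_zero_iff_norm_tendsto_zero.mpr (by simpa [Real.norm_eq_abs] using hsq)
  -- uniform bounds for φ on S
  set R : ℝ := Real.sqrt (∑ i, (umax i)^2) with hR
  have h0S : (0 : EuclideanSpace ℝ (Fin N)) ∈ S := by
    intro i
    simp [Set.mem_Icc, (humax i).le]
  have hnormle : ∀ x ∈ S, ‖x‖ ≤ R := by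
    intro x hx
    rw [EuclideanSpace.norm_eq]
    apply Real.sqrt_le_sqrt
    apply Finset.sum_le_sum
    intro i _
    have h1 := (hx i).1
    have h2 := (hx i).2
    rw [Real.norm_eq_abs, abs_of_nonneg h1]
    exact pow_le_pow_left₀ h1 h2 2
  have hφbd : ∀ x ∈ S, φ 0 - (M:ℝ)*R ≤ φ x ∧ φ x ≤ φ 0 + (M:ℝ)*R := by
    intro x hx
    have := hlip.dist_le_mul x hx 0 h0S
    rw [Real.dist_eq, dist_eq_norm, sub_zero] at this
    have hMR : (M:ℝ) * ‖x‖ ≤ (M:ℝ) * R := by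
      exact mul_le_mul_of_nonneg_left (hnormle x hx) M.coe_nonneg
    have habs := abs_le.mp (this.trans hMR)
    constructor <;> linarith [habs.1, habs.2]
  have hBlo : ∀ t, φ 0 - (M:ℝ)*R ≤ B t := fun t => (hφbd _ (hmemG t)).1
  have hBhi : ∀ t, B t ≤ φ 0 + (M:ℝ)*R := fun t => (hφbd _ (hmemG t)).2
  have hChi : ∀ t : ℕ, 1 ≤ t → C t ≤ φ 0 + (M:ℝ)*R := by
    intro t ht
    have ht' : (0:ℝ) < t := by exact_mod_cast ht
    have hzS : ∀ τ ∈ Finset.range t,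
        φ ((WithLp.equiv 2 (Fin N → ℝ)).symm (fun i => γ i τ)) ≤ φ 0 + (M:ℝ)*R := by
      intro τ _
      refine (hφbd _ ?_).2
      intro i
      simpa [WithLp.equiv_symm_apply, PiLp.toLp_apply] using hγ i τ
    calc C t ≤ (1 / (t : ℝ)) * ∑ τ ∈ Finset.range t, (φ 0 + (M:ℝ)*R) := by
          apply mul_le_mul_of_nonneg_left (Finset.sum_le_sum hzS) (by positivity)
      _ = φ 0 + (M:ℝ)*R := by
          rw [Finset.sum_const, Finset.card_range, nsmul_eq_mul]
          field_simp
  -- boundedness facts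
  have hBbd_ge : Filter.IsBoundedUnder (· ≥ ·) atTop B :=
    ⟨φ 0 - (M:ℝ)*R, Filter.eventually_map.2 (Filter.Eventually.of_forall hBlo)⟩
  have hBbd_le : Filter.IsBoundedUnder (· ≤ ·) atTop B :=
    ⟨φ 0 + (M:ℝ)*R, Filter.eventually_map.2 (Filter.Eventually.of_forall hBhi)⟩
  have hClo : ∀ t : ℕ, 1 ≤ t → φ 0 - (M:ℝ)*R ≤ C t := by
    intro t ht
    have ht' : (0:ℝ) < t := by exact_mod_cast ht
    have hzS : ∀ τ ∈ Finset.range t,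
        φ 0 - (M:ℝ)*R ≤ φ ((WithLp.equiv 2 (Fin N → ℝ)).symm (fun i => γ i τ)) := by
      intro τ _
      refine (hφbd _ ?_).1
      intro i
      simpa [WithLp.equiv_symm_apply, PiLp.toLp_apply] using hγ i τ
    calc φ 0 - (M:ℝ)*R = (1 / (t : ℝ)) * ∑ τ ∈ Finset.range t, (φ 0 - (M:ℝ)*R) := by
          rw [Finset.sum_const, Finset.card_range, nsmul_eq_mul]; field_simp
      _ ≤ C t := mul_le_mul_of_nonneg_left (Finset.sum_le_sum hzS) (by positivity)
  have hCbd_ge : Filter.IsBoundedUnder (· ≥ ·) atTop C :=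
    ⟨φ 0 - (M:ℝ)*R, Filter.eventually_map.2
      ((Filter.eventually_ge_atTop 1).mono fun t ht => hClo t ht)⟩
  have hCbd_le : Filter.IsBoundedUnder (· ≤ ·) atTop C :=
    ⟨φ 0 + (M:ℝ)*R, Filter.eventually_map.2
      ((Filter.eventually_ge_atTop 1).mono fun t ht => hChi t ht)⟩
  -- liminf C ≤ liminf B
  have step1 : Filter.liminf C atTop ≤ Filter.liminf B atTop := by
    apply Filter.liminf_le_liminf
    · exact (Filter.eventually_ge_atTop 1).mono fun t ht => jensen t ht
    · exact hCbd_ge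
    · exact hBbd_le.isCoboundedUnder_ge
  -- liminf B ≤ liminf A
  have step2 : Filter.liminf B atTop ≤ Filter.liminf A atTop := by
    have key := le_liminf_add (f := atTop) (u := fun t => A t - B t) (v := B)
      hdiff.isBoundedUnder_ge hdiff.isBoundedUnder_le hBbd_ge hBbd_le.isCoboundedUnder_ge
    have h1 : Filter.liminf (fun t => A t - B t) atTop = 0 := hdiff.liminf_eq
    have h2 : (fun t => A t - B t) + B = A := by
      funext t; simp
    rw [h1, h2, zero_add] at key
    exact key
  exact step1.trans step2
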